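/- Let $Q \subseteq \mathbb{R}^d$ be a cube, $1 \le p \le q < \infty$, and let $\alpha \ge \beta := \frac1q + \frac1{p'}$. Then for any pair of weights $(\omega,\sigma)$ on $Q$, the two-weight Muckenhoupt characteristics satisfy $[\omega,\sigma]_{A^{\alpha}_{p,q}(Q)} = |Q|^{\alpha-\beta}\,[\omega,\sigma]_{A^{\beta}_{p,q}(Q)}$. -/

import Mathlib

open MeasureTheory
open scoped ENNReal NNReal

noncomputable section

abbrev Euc (d : ℕ) := EuclideanSpace ℝ (Fin d)

structure Cube (d : ℕ) where
  center : Euc d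
  side : ℝ
  side_pos : 0 < side

namespace Cube

variable {d : ℕ}

/-- A (half-open) axis-parallel cube in `ℝ^d`. -/
def toSet (Q : Cube d) : Set (Euc d) :=
  {x | ∀ i, Q.center i - Q.side / 2 ≤ x i ∧ x i < Q.center i + Q.side / 2}

/-- The volume `|Q| = ℓ(Q)^d` of a cube. -/
def vol (Q : Cube d) : ℝ := Q.side ^ d

/-- The average `⟨f⟩_Q = |Q|⁻¹ ∫_Q f`. -/
def avg (Q : Cube d) (f : Euc d → ℝ) : ℝ := Q.vol⁻¹ * ∫ x in Q.toSet, f x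

/-- The `ℝ≥0∞`-valued average of a nonnegative function. -/
def elavg (Q : Cube d) (g : Euc d → ℝ≥0∞) : ℝ≥0∞ :=
  (∫⁻ x in Q.toSet, g x) / ENNReal.ofReal Q.vol

/-- The `L^t`-average `⟨f⟩_{t,Q} = (|Q|⁻¹ ∫_Q |f|^t)^{1/t}`, with the
essential supremum when `t = ∞`. -/
def lavg (Q : Cube d) (t : ℝ≥0∞) (f : Euc d → ℝ) : ℝ≥0∞ :=
  if t = ⊤ then essSup (fun x => ENNReal.ofReal |f x|) (volume.restrict Q.toSet)
  else ((∫⁻ x in Q.toSet, ENNReal.ofReal |f x| ^ t.toReal) / ENNReal.ofReal Q.vol) ^ (1 / t.toReal)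

/-- The concentric dilation `γ Q` of a cube (only intended for `γ ≥ 1`). -/
def scale (γ : ℝ) (Q : Cube d) : Cube d :=
  ⟨Q.center, max γ 1 * Q.side,
    mul_pos (lt_of_lt_of_le one_pos (le_max_right γ 1)) Q.side_pos⟩

/-- The dyadic subcube of `Q` of generation `j` with index `k`. -/
def dyadicSub (Q : Cube d) (j : ℕ) (k : Fin d → ℕ) : Cube d where
  center := WithLp.toLp 2 (fun i => Q.center i - Q.side / 2 + ((k i : ℝ) + 1 / 2) * (Q.side / 2 ^ j))
  side := Q.side / 2 ^ j
  side_pos := div_pos Q.side_pos (by positivity)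

/-- The `2ℓ(Q)`-periodic even reflection map: `reflect Q x ∈ Q` and functions
defined on `Q` are extended outside `Q` by precomposing with `reflect Q`. -/
def reflect (Q : Cube d) (x : Euc d) : Euc d := WithLp.toLp 2 (fun i =>
  (Q.center i - Q.side / 2) + Q.side -
    |(x i - (Q.center i - Q.side / 2) -
        2 * Q.side * ((⌊(x i - (Q.center i - Q.side / 2)) / (2 * Q.side)⌋ : ℤ) : ℝ)) - Q.side|)

end Cube

/-- `R` is a dyadic subcube of `Q`. -/
def IsDyadicSub {d : ℕ} (Q R : Cube d) : Prop :=
  ∃ (j : ℕ) (k : Fin d → ℕ), (∀ i, k i < 2 ^ j) ∧ R = Q.dyadicSub j k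

/-- A collection of cubes is sparse if each `R` carries a subset `E R ⊆ R`
with `|E R| ≥ |R|/2`, the sets `E R` being pairwise disjoint. -/
def IsSparse {d : ℕ} (𝒮 : Set (Cube d)) : Prop :=
  ∃ E : Cube d → Set (Euc d),
    (∀ R ∈ 𝒮, MeasurableSet (E R) ∧ E R ⊆ R.toSet ∧
      ENNReal.ofReal R.vol ≤ 2 * volume (E R)) ∧
    𝒮.Pairwise fun R R' => Disjoint (E R) (E R')

/-- The Hölder conjugate `p'` of `p`, as an extended real exponent. -/
def conjE (p : ℝ) : ℝ≥0∞ := if p = 1 then ⊤ else ENNReal.ofReal (p / (p - 1))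

/-- The two-weight Muckenhoupt characteristic
`[ω,σ]_{A^α_{p,q}(Q)} = sup_{R ⊆ Q} |R|^α ⟨ω⟩_{q,R} ⟨σ⁻¹⟩_{p',R}`. -/
def muck {d : ℕ} (Q : Cube d) (p q α : ℝ) (ω σ : Euc d → ℝ) : ℝ≥0∞ :=
  ⨆ R : {R : Cube d // R.toSet ⊆ Q.toSet},
    ENNReal.ofReal (R.1.vol ^ α) * R.1.lavg (ENNReal.ofReal q) ω *
      R.1.lavg (conjE p) fun x => (σ x)⁻¹

/-- The classical Muckenhoupt `A_p` characteristic
`[w]_{A_p} = sup_Q ⟨w⟩_{1,Q} ⟨w⁻¹⟩_{1/(p-1),Q}` over all cubes in `ℝ^d`. -/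
def apChar (d : ℕ) (p : ℝ) (w : Euc d → ℝ) : ℝ≥0∞ :=
  ⨆ R : Cube d,
    R.lavg 1 w * R.lavg (if p = 1 then ⊤ else ENNReal.ofReal (1 / (p - 1))) fun x => (w x)⁻¹

/-- The localized maximal function `M(w 1_R)(x) = sup_{S ⊆ R, x ∈ S} ⟨w⟩_{1,S}`. -/
def locMaxFn {d : ℕ} (R : Cube d) (w : Euc d → ℝ) (x : Euc d) : ℝ≥0∞ :=
  ⨆ S : {S : Cube d // S.toSet ⊆ R.toSet ∧ x ∈ S.toSet}, S.1.lavg 1 w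

/-- The local Fujii–Wilson `A_∞(Q)` characteristic. -/
def ainf {d : ℕ} (Q : Cube d) (w : Euc d → ℝ) : ℝ≥0∞ :=
  ⨆ R : {R : Cube d // R.toSet ⊆ Q.toSet},
    (∫⁻ x in R.1.toSet, locMaxFn R.1 w x) / ∫⁻ x in R.1.toSet, ENNReal.ofReal (w x)

/-- The weighted norm `‖g‖_{L^p_σ(A)} = (∫_A |g|^p σ^p)^{1/p}` (weight as multiplier). -/
def wLp {d : ℕ} (A : Set (Euc d)) (p : ℝ) (σ g : Euc d → ℝ) : ℝ≥0∞ :=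
  (∫⁻ x in A, ENNReal.ofReal (|g x| * σ x) ^ p) ^ (1 / p)

/-- The fractional difference quotient
`f^{s,r}_A(x) = (∫_A |f(x)-f(y)|^r / |x-y|^{d+sr} dy)^{1/r}`. -/
def fsr {d : ℕ} (A : Set (Euc d)) (s r : ℝ) (f : Euc d → ℝ) (x : Euc d) : ℝ≥0∞ :=
  (∫⁻ y in A, ENNReal.ofReal |f x - f y| ^ r / edist x y ^ ((d : ℝ) + s * r)) ^ (1 / r)

/-- `f^{s,r}_{3R}`, where `f` is extended outside `Q` by periodic reflection. -/
def fsr3 {d : ℕ} (Q : Cube d) (s r : ℝ) (f : Euc d → ℝ) (R : Cube d) (x : Euc d) : ℝ≥0∞ :=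
  fsr (Cube.scale 3 R).toSet s r (fun y => f (Q.reflect y)) x

/-- The weighted weak norm `‖g‖_{L^{q,∞}_ω(Q)}` of an `ℝ≥0∞`-valued function. -/
def weakNE {d : ℕ} (Q : Cube d) (q : ℝ) (ω : Euc d → ℝ) (g : Euc d → ℝ≥0∞) : ℝ≥0∞ :=
  ⨆ lam : ℝ≥0, (lam : ℝ≥0∞) *
    (∫⁻ x in Q.toSet ∩ {x | (lam : ℝ≥0∞) < g x}, ENNReal.ofReal (ω x) ^ q) ^ (1 / q)

/-- The weighted weak norm `‖g‖_{L^{q,∞}_ω(Q)}` of a real valued function. -/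
def weakN {d : ℕ} (Q : Cube d) (q : ℝ) (ω g : Euc d → ℝ) : ℝ≥0∞ :=
  weakNE Q q ω fun x => ENNReal.ofReal |g x|

/-- The weighted Triebel–Lizorkin seminorm `[u]_{F^{s,σ}_{p,r}(Q)}`. -/
def fSemi {d : ℕ} (Q : Cube d) (p r s : ℝ) (σ u : Euc d → ℝ) : ℝ≥0∞ :=
  (∫⁻ x in Q.toSet, fsr Q.toSet s r u x ^ p * ENNReal.ofReal (σ x) ^ p) ^ (1 / p)
section Aux

open ENNReal

variable {d : ℕ}

lemma Cube.vol_pos (R : Cube d) : 0 < R.vol := pow_pos R.side_pos d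

lemma Cube.side_le_of_subset {R Q : Cube d} (hd : d ≠ 0) (h : R.toSet ⊆ Q.toSet) :
    R.side ≤ Q.side := by
  obtain ⟨i⟩ : Nonempty (Fin d) := ⟨⟨0, Nat.pos_of_ne_zero hd⟩⟩
  by_contra hlt
  push_neg at hlt
  have key : ∀ t : ℝ, 0 ≤ t → t < R.side → t < Q.side := by
    intro t ht0 htR
    have hx : ∀ s : ℝ, 0 ≤ s → s < R.side →
        (WithLp.toLp 2 (fun j => R.center j - R.side / 2 + if j = i then s else 0) : Euc d) ∈ R.toSet := by
      intro s hs0 hsR j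
      simp only [Set.mem_setOf_eq, WithLp.ofLp_toLp]
      by_cases hj : j = i <;> simp only [hj, if_true, if_false, ite_true, ite_false] <;>
        constructor <;> nlinarith [R.side_pos]
    have h0 := h (hx 0 le_rfl R.side_pos) i
    have ht := h (hx t ht0 htR) i
    simp only [Set.mem_setOf_eq, WithLp.ofLp_toLp, if_pos rfl, ite_true] at h0 ht
    linarith [h0.1, ht.2]
  exact absurd (key Q.side Q.side_pos.le hlt) (lt_irrefl _)

lemma Cube.vol_le_of_subset {R Q : Cube d} (h : R.toSet ⊆ Q.toSet) : R.vol ≤ Q.vol := by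
  rcases Nat.eq_zero_or_pos d with hd | hd
  · simp [Cube.vol, hd]
  · exact pow_le_pow_left₀ R.side_pos.le (Cube.side_le_of_subset hd.ne' h) d

lemma Cube.unnorm (R : Cube d) {r : ℝ} (hr : 0 < r) (f : Euc d → ℝ) :
    (ENNReal.ofReal R.vol) ^ (1 / r) * R.lavg (ENNReal.ofReal r) f
      = (∫⁻ x in R.toSet, ENNReal.ofReal |f x| ^ r) ^ (1 / r) := by
  rw [Cube.lavg, if_neg ENNReal.ofReal_ne_top, ENNReal.toReal_ofReal hr.le,
    ← ENNReal.mul_rpow_of_nonneg _ _ (by positivity)]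
  congr 1
  exact ENNReal.mul_div_cancel (by simp [R.vol_pos]) ENNReal.ofReal_ne_top

end Aux
theorem muck_eq_of_beta_le (d : ℕ) (Q : Cube d) (p q α : ℝ)
    (hp : 1 ≤ p) (hpq : p ≤ q)
    (ω σ : Euc d → ℝ) (hω : ∀ x, 0 < ω x) (hσ : ∀ x, 0 < σ x)
    (hωm : Measurable ω) (hσm : Measurable σ)
    (hα : 1 / q + (1 - 1 / p) ≤ α) :
    muck Q p q α ω σ =
      ENNReal.ofReal (Q.vol ^ (α - (1 / q + (1 - 1 / p)))) *
        muck Q p q (1 / q + (1 - 1 / p)) ω σ := by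
  set β : ℝ := 1 / q + (1 - 1 / p) with hβ
  have hq1 : 1 ≤ q := hp.trans hpq
  have hq0 : 0 < q := lt_of_lt_of_le one_pos hq1
  have hαβ : 0 ≤ α - β := sub_nonneg.mpr hα
  -- split the volume factor
  have hsplit : ∀ R : Cube d, ENNReal.ofReal (R.vol ^ α)
      = ENNReal.ofReal (R.vol ^ (α - β)) * ENNReal.ofReal (R.vol ^ β) := by
    intro R
    rw [← ENNReal.ofReal_mul (Real.rpow_pos_of_pos R.vol_pos _).le, ← Real.rpow_add R.vol_pos]
    ring_nf
  -- monotonicity of the β-term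
  have hmono : ∀ R : Cube d, R.toSet ⊆ Q.toSet →
      ENNReal.ofReal (R.vol ^ β) * R.lavg (ENNReal.ofReal q) ω *
          R.lavg (conjE p) (fun x => (σ x)⁻¹)
        ≤ ENNReal.ofReal (Q.vol ^ β) * Q.lavg (ENNReal.ofReal q) ω *
          Q.lavg (conjE p) (fun x => (σ x)⁻¹) := by
    intro R hRQ
    have hIω : (ENNReal.ofReal R.vol) ^ (1 / q) * R.lavg (ENNReal.ofReal q) ω
        ≤ (ENNReal.ofReal Q.vol) ^ (1 / q) * Q.lavg (ENNReal.ofReal q) ω := by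
      rw [Cube.unnorm R hq0, Cube.unnorm Q hq0]
      exact ENNReal.rpow_le_rpow (lintegral_mono_set hRQ) (by positivity)
    by_cases hp1 : p = 1
    · have hβq : β = 1 / q := by rw [hβ, hp1]; ring
      have hc : conjE p = ⊤ := by rw [conjE, if_pos hp1]
      have hess : R.lavg ⊤ (fun x => (σ x)⁻¹) ≤ Q.lavg ⊤ (fun x => (σ x)⁻¹) := by
        rw [Cube.lavg, if_pos rfl, Cube.lavg, if_pos rfl]
        exact essSup_mono_measure' (Measure.restrict_mono hRQ le_rfl)
      rw [hβq, hc,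
        ← ENNReal.ofReal_rpow_of_pos R.vol_pos, ← ENNReal.ofReal_rpow_of_pos Q.vol_pos]
      exact mul_le_mul' hIω hess
    · have hp1' : 1 < p := lt_of_le_of_ne hp (Ne.symm hp1)
      have hr' : 0 < p / (p - 1) := by
        apply div_pos (lt_of_lt_of_le one_pos hp); linarith
      have hinv : 1 / (p / (p - 1)) = 1 - 1 / p := by
        field_simp
      have hc : conjE p = ENNReal.ofReal (p / (p - 1)) := by rw [conjE, if_neg hp1]
      have hIσ : (ENNReal.ofReal R.vol) ^ (1 - 1 / p) * R.lavg (conjE p) (fun x => (σ x)⁻¹)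
          ≤ (ENNReal.ofReal Q.vol) ^ (1 - 1 / p) * Q.lavg (conjE p) (fun x => (σ x)⁻¹) := by
        rw [hc, ← hinv, Cube.unnorm R hr', Cube.unnorm Q hr']
        exact ENNReal.rpow_le_rpow (lintegral_mono_set hRQ) (by positivity)
      have hvsplit : ∀ S : Cube d, ENNReal.ofReal (S.vol ^ β)
          = (ENNReal.ofReal S.vol) ^ (1 / q) * (ENNReal.ofReal S.vol) ^ (1 - 1 / p) := by
        intro S
        rw [← ENNReal.ofReal_rpow_of_pos S.vol_pos, hβ,
          ENNReal.rpow_add _ _ (by simp [S.vol_pos]) ENNReal.ofReal_ne_top]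
      calc ENNReal.ofReal (R.vol ^ β) * R.lavg (ENNReal.ofReal q) ω *
              R.lavg (conjE p) (fun x => (σ x)⁻¹)
          = ((ENNReal.ofReal R.vol) ^ (1 / q) * R.lavg (ENNReal.ofReal q) ω) *
              ((ENNReal.ofReal R.vol) ^ (1 - 1 / p) * R.lavg (conjE p) (fun x => (σ x)⁻¹)) := by
            rw [hvsplit]; ring
        _ ≤ ((ENNReal.ofReal Q.vol) ^ (1 / q) * Q.lavg (ENNReal.ofReal q) ω) *
              ((ENNReal.ofReal Q.vol) ^ (1 - 1 / p) * Q.lavg (conjE p) (fun x => (σ x)⁻¹)) :=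
            mul_le_mul' hIω hIσ
        _ = _ := by rw [hvsplit]; ring
  simp only [muck]
  apply le_antisymm
  · apply iSup_le
    intro R
    rw [hsplit R.1]
    have : ENNReal.ofReal (R.1.vol ^ (α - β)) ≤ ENNReal.ofReal (Q.vol ^ (α - β)) :=
      ENNReal.ofReal_le_ofReal
        (Real.rpow_le_rpow R.1.vol_pos.le (Cube.vol_le_of_subset R.2) hαβ)
    calc ENNReal.ofReal (R.1.vol ^ (α - β)) * ENNReal.ofReal (R.1.vol ^ β) *
            R.1.lavg (ENNReal.ofReal q) ω * R.1.lavg (conjE p) (fun x => (σ x)⁻¹)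
        ≤ ENNReal.ofReal (Q.vol ^ (α - β)) * (ENNReal.ofReal (R.1.vol ^ β) *
            R.1.lavg (ENNReal.ofReal q) ω * R.1.lavg (conjE p) (fun x => (σ x)⁻¹)) := by
          rw [← mul_assoc, ← mul_assoc]
          exact mul_le_mul' (mul_le_mul' (mul_le_mul' this le_rfl) le_rfl) le_rfl
      _ ≤ _ := mul_le_mul' le_rfl (le_iSup (fun R : {R : Cube d // R.toSet ⊆ Q.toSet} =>
            ENNReal.ofReal (R.1.vol ^ β) * R.1.lavg (ENNReal.ofReal q) ω *
              R.1.lavg (conjE p) (fun x => (σ x)⁻¹)) R)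
  · rw [ENNReal.mul_iSup]
    apply iSup_le
    intro R
    have h1 : ENNReal.ofReal (R.1.vol ^ β) * R.1.lavg (ENNReal.ofReal q) ω *
        R.1.lavg (conjE p) (fun x => (σ x)⁻¹)
        ≤ ENNReal.ofReal (Q.vol ^ β) * Q.lavg (ENNReal.ofReal q) ω *
        Q.lavg (conjE p) (fun x => (σ x)⁻¹) := hmono R.1 R.2
    calc ENNReal.ofReal (Q.vol ^ (α - β)) * (ENNReal.ofReal (R.1.vol ^ β) *
            R.1.lavg (ENNReal.ofReal q) ω * R.1.lavg (conjE p) (fun x => (σ x)⁻¹))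
        ≤ ENNReal.ofReal (Q.vol ^ (α - β)) * (ENNReal.ofReal (Q.vol ^ β) *
            Q.lavg (ENNReal.ofReal q) ω * Q.lavg (conjE p) (fun x => (σ x)⁻¹)) :=
          mul_le_mul' le_rfl h1
      _ = ENNReal.ofReal (Q.vol ^ α) * Q.lavg (ENNReal.ofReal q) ω *
            Q.lavg (conjE p) (fun x => (σ x)⁻¹) := by rw [hsplit Q]; ring
      _ ≤ _ := le_iSup (fun R : {R : Cube d // R.toSet ⊆ Q.toSet} =>
            ENNReal.ofReal (R.1.vol ^ α) * R.1.lavg (ENNReal.ofReal q) ω *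
              R.1.lavg (conjE p) (fun x => (σ x)⁻¹)) ⟨Q, subset_rfl⟩
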